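/- arXiv:2404.11873 — 4 statements merged into one kernel-verified Lean document; each statement's English description precedes it below -/
import Mathlib

section
/- Let N be an odd integer and a, b integers with gcd(N, a, b) = 1. There exists an integer i with a + b ≡ -bi (mod N) and b ≡ ai (mod N) if and only if a² + ab + b² ≡ 0 (mod N). -/
/-- Let `N` be odd, `gcd(N, a, b) = 1`. There exists an integer `i` with
`a + b ≡ -b*i (mod N)` and `b ≡ a*i (mod N)` iff `a² + ab + b² ≡ 0 (mod N)`. -/
theorem fermat_quotient_beta_descent_criterion (N a b : ℤ) (hN : Odd N)
    (hgcd : Int.gcd N (Int.gcd a b) = 1) :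
    (∃ i : ℤ, a + b ≡ -(b * i) [ZMOD N] ∧ b ≡ a * i [ZMOD N]) ↔
      a ^ 2 + a * b + b ^ 2 ≡ 0 [ZMOD N] := by
  constructor
  · rintro ⟨i, h1, h2⟩
    calc a ^ 2 + a * b + b ^ 2 = a * (a + b) + b * b := by ring
      _ ≡ a * -(b * i) + b * (a * i) [ZMOD N] := (h1.mul_left a).add (h2.mul_left b)
      _ = 0 := by ring
  · intro h
    have hdvd : N ∣ a ^ 2 + a * b + b ^ 2 := by
      simpa using Int.modEq_iff_dvd.mp h.symm
    -- First show gcd(N, a) = 1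
    set d : ℤ := (Int.gcd N a : ℤ) with hd
    have hdb : Int.gcd d b = 1 := by
      rw [hd, Int.gcd_assoc]; exact hgcd
    have hcop : IsCoprime d b := Int.isCoprime_iff_gcd_eq_one.mpr hdb
    have hdN : d ∣ N := Int.gcd_dvd_left N a
    have hda : d ∣ a := Int.gcd_dvd_right N a
    have hdbb : d ∣ b * b := by
      have h1 : d ∣ a ^ 2 + a * b + b ^ 2 := hdN.trans hdvd
      have h2 : d ∣ a * (a + b) := hda.mul_right (a + b)
      have := dvd_sub h1 h2
      have heq : a ^ 2 + a * b + b ^ 2 - a * (a + b) = b * b := by ring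
      rwa [heq] at this
    have hdb' : d ∣ b := hcop.dvd_of_dvd_mul_left hdbb
    have hNa : Int.gcd N a = 1 := by
      have h1 : d ∣ (Int.gcd N (Int.gcd a b) : ℤ) := Int.dvd_coe_gcd hdN (Int.dvd_coe_gcd hda hdb')
      rw [hgcd] at h1
      rw [hd] at h1
      have h2 : Int.gcd N a ∣ 1 := by exact_mod_cast h1
      exact Nat.eq_one_of_dvd_one h2
    obtain ⟨u, v, huv⟩ := Int.isCoprime_iff_gcd_eq_one.mpr hNa
    -- u * N + v * a = 1, so a * v ≡ 1 [ZMOD N]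
    have hinv : a * v ≡ 1 [ZMOD N] := by
      rw [Int.modEq_iff_dvd]
      exact ⟨u, by linarith⟩
    have hq : a ^ 2 + a * b ≡ -(b * b) [ZMOD N] := by
      rw [Int.modEq_iff_dvd]
      have := Dvd.dvd.neg_right hdvd
      have heq : -(a ^ 2 + a * b + b ^ 2) = -(b * b) - (a ^ 2 + a * b) := by ring
      rwa [heq] at this
    refine ⟨v * b, ?_, ?_⟩
    · calc a + b = 1 * (a + b) := by ring
        _ ≡ a * v * (a + b) [ZMOD N] := hinv.symm.mul_right _
        _ = v * (a ^ 2 + a * b) := by ring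
        _ ≡ v * -(b * b) [ZMOD N] := hq.mul_left v
        _ = -(b * (v * b)) := by ring
    · calc b = 1 * b := by ring
        _ ≡ a * v * b [ZMOD N] := hinv.symm.mul_right b
        _ = a * (v * b) := by ring
end

section
/- Let N be an integer with gcd(N, 6) = 1, let ξ_6 = exp(πi/3) be a primitive 6th root of unity, and let β(u:v:w) = (-v:w:u) be the order-3 automorphism of the Fermat curve F_N: u^N + v^N = w^N. Then the fixed points of β on F_N are exactly S = (ζ_6 : ζ_6^{-1} : 1) and S̄ = (ζ_6^{-1} : ζ_6 : 1), where ζ_6 is a primitive 6th root of unity. -/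
/-- For `gcd(N, 6) = 1`, the fixed points of `β(u:v:w) = (-v:w:u)` on the
Fermat curve `u^N + v^N = w^N` are exactly `S = (ζ₆ : ζ₆⁻¹ : 1)` and
`S̄ = (ζ₆⁻¹ : ζ₆ : 1)`.  In homogeneous coordinates, a nonzero `p` on the curve is a
projective fixed point of `β` (i.e. `β p = c • p` for some scalar `c ≠ 0`) if and only if
`p` is a nonzero scalar multiple of `S` or of `S̄`. -/
theorem fixed_points_of_beta_on_fermat (N : ℕ) (hN : Nat.gcd N 6 = 1)
    (ζ₆ : ℂ) (h₆ : IsPrimitiveRoot ζ₆ 6)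
    (p : ℂ × ℂ × ℂ) (hp0 : p ≠ 0) (hpF : p.1 ^ N + p.2.1 ^ N = p.2.2 ^ N) :
    (∃ c : ℂ, c ≠ 0 ∧ (-p.2.1, p.2.2, p.1) = c • p) ↔
      (∃ t : ℂ, t ≠ 0 ∧
        (p = t • ((ζ₆, ζ₆⁻¹, 1) : ℂ × ℂ × ℂ) ∨ p = t • ((ζ₆⁻¹, ζ₆, 1) : ℂ × ℂ × ℂ))) := by
  have h6 : ζ₆ ^ 6 = 1 := h₆.pow_eq_one
  have h3ne : ζ₆ ^ 3 ≠ 1 := h₆.pow_ne_one_of_pos_of_lt (by norm_num) (by norm_num)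
  have h2ne : ζ₆ ^ 2 ≠ 1 := h₆.pow_ne_one_of_pos_of_lt (by norm_num) (by norm_num)
  have hz0 : ζ₆ ≠ 0 := h₆.ne_zero (by norm_num)
  have h3 : ζ₆ ^ 3 = -1 := by
    have h : (ζ₆ ^ 3 - 1) * (ζ₆ ^ 3 + 1) = 0 := by linear_combination h6
    rcases mul_eq_zero.1 h with h | h
    · exact absurd (sub_eq_zero.mp h) h3ne
    · linear_combination h
  have hq : ζ₆ ^ 2 - ζ₆ + 1 = 0 := by
    have h : (ζ₆ + 1) * (ζ₆ ^ 2 - ζ₆ + 1) = 0 := by linear_combination h3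
    rcases mul_eq_zero.1 h with h | h
    · exfalso; apply h2ne
      have : ζ₆ = -1 := by linear_combination h
      rw [this]; ring
    · exact h
  have hinv : ζ₆⁻¹ = -ζ₆ ^ 2 := inv_eq_of_mul_eq_one_right (by linear_combination -h3)
  have hodd : Odd N := by
    rcases Nat.even_or_odd N with he | ho
    · exfalso
      have : 2 ∣ Nat.gcd N 6 := Nat.dvd_gcd he.two_dvd (by norm_num)
      rw [hN] at this; norm_num at this
    · exact ho
  constructor
  · rintro ⟨c, hc, heq⟩
    obtain ⟨e1, e2, e3⟩ : -p.2.1 = c * p.1 ∧ p.2.2 = c * p.2.1 ∧ p.1 = c * p.2.2 := by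
      simpa [Prod.ext_iff, smul_eq_mul] using heq
    have hu : p.1 ≠ 0 := by
      intro h
      apply hp0
      have hv : p.2.1 = 0 := by
        have := e1; rw [h, mul_zero, neg_eq_zero] at this; exact this
      have hw : p.2.2 = 0 := by rw [e2, hv, mul_zero]
      simp [Prod.ext_iff, h, hv, hw]
    have hc3 : c ^ 3 = -1 := by
      have h0 : (c ^ 3 + 1) * p.1 = 0 := by linear_combination e3 + c * e2 - c ^ 2 * e1
      have := (mul_eq_zero.1 h0).resolve_right hu
      linear_combination this
    have hfac : (c + 1) * (c ^ 2 - c + 1) = 0 := by linear_combination hc3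
    rcases mul_eq_zero.1 hfac with h | h
    · -- c = -1 : contradiction with Fermat
      exfalso
      have hc1 : c = -1 := by linear_combination h
      subst hc1
      have hv : p.2.1 = p.1 := by linear_combination -e1
      have hw : p.2.2 = -p.1 := by linear_combination e2 - hv
      rw [hv, hw, hodd.neg_pow] at hpF
      have h30 : (3 : ℂ) * p.1 ^ N = 0 := by linear_combination hpF
      have : p.1 ^ N = 0 := by
        rcases mul_eq_zero.1 h30 with h | h
        · norm_num at h
        · exact h
      exact hu ((pow_eq_zero_iff hodd.pos.ne').mp this)
    · have hsplit : (c + ζ₆ ^ 2) * (c + ζ₆ ^ 4) = 0 := by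
        linear_combination h + c * (ζ₆ ^ 2 + ζ₆ + 1) * hq + h6
      rcases mul_eq_zero.1 hsplit with hcc | hcc
      · -- c = -ζ₆ ^ 2 : the S̄ case
        have hcv : c = -ζ₆ ^ 2 := by linear_combination hcc
        subst hcv
        refine ⟨p.2.2, ?_, Or.inr ?_⟩
        · intro h0
          rw [h0] at e3
          simp at e3
          exact hu e3
        · rw [hinv]
          refine Prod.ext ?_ (Prod.ext ?_ ?_)
          · show p.1 = p.2.2 * (-ζ₆ ^ 2)
            linear_combination e3
          · show p.2.1 = p.2.2 * ζ₆
            linear_combination -ζ₆ * e2 + p.2.1 * h3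
          · show p.2.2 = p.2.2 * 1
            ring
      · -- c = -ζ₆ ^ 4 : the S case
        have hcv : c = -ζ₆ ^ 4 := by linear_combination hcc
        subst hcv
        refine ⟨p.2.2, ?_, Or.inl ?_⟩
        · intro h0
          rw [h0] at e3
          simp at e3
          exact hu e3
        · rw [hinv]
          refine Prod.ext ?_ (Prod.ext ?_ ?_)
          · show p.1 = p.2.2 * ζ₆
            linear_combination e3 - ζ₆ * p.2.2 * h3
          · show p.2.1 = p.2.2 * (-ζ₆ ^ 2)
            linear_combination ζ₆ ^ 2 * e2 - p.2.1 * h6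
          · show p.2.2 = p.2.2 * 1
            ring
  · rintro ⟨t, ht, h | h⟩ <;> subst h
    · refine ⟨ζ₆, hz0, ?_⟩
      rw [hinv]
      simp only [Prod.smul_def, Prod.mk.injEq, smul_eq_mul]
      refine ⟨by ring, by linear_combination t * h3, by ring⟩
    · refine ⟨-ζ₆ ^ 2, by simpa using hz0, ?_⟩
      rw [hinv]
      simp only [Prod.smul_def, Prod.mk.injEq, smul_eq_mul]
      refine ⟨by linear_combination -ζ₆ * t * h3, by linear_combination t * h3, by ring⟩
end

section
/- Let N > 3, a, b ∈ {1,...,N-1} with gcd(N, a, b) = 1, and suppose a² ≡ b² (mod N). Then there exists an integer i with a ≡ bi (mod N) and b ≡ ai (mod N); conversely, existence of such i implies a² ≡ b² (mod N). -/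
/-- For `N > 3`, `a, b ∈ {1, …, N-1}` with `gcd(N, a, b) = 1`:
`a² ≡ b² (mod N)` holds if and only if there is an integer `i` with `a ≡ bi (mod N)`
and `b ≡ ai (mod N)` (criterion for the order-2 automorphism `α` to descend). -/
theorem fermat_quotient_alpha_descent_criterion (N a b : ℤ) (hN : 3 < N)
    (ha : 1 ≤ a ∧ a ≤ N - 1) (hb : 1 ≤ b ∧ b ≤ N - 1)
    (hgcd : Int.gcd N (Int.gcd a b) = 1) :
    a ^ 2 ≡ b ^ 2 [ZMOD N] ↔
      ∃ i : ℤ, a ≡ b * i [ZMOD N] ∧ b ≡ a * i [ZMOD N] := by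
  constructor
  · intro h
    obtain ⟨k, hk⟩ : N ∣ b ^ 2 - a ^ 2 := h.dvd
    have hcop : IsCoprime N ((Int.gcd a b : ℤ)) :=
      Int.isCoprime_iff_gcd_eq_one.mpr hgcd
    obtain ⟨s, t, hst⟩ := hcop
    rw [Int.gcd_eq_gcd_ab a b] at hst
    set u : ℤ := t * Int.gcdA a b with hu
    set v : ℤ := t * Int.gcdB a b with hv
    have heq : s * N + u * a + v * b = 1 := by
      rw [hu, hv]; linear_combination hst
    refine ⟨u * b + v * a, ?_, ?_⟩
    · rw [Int.modEq_iff_dvd]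
      exact ⟨u * k - a * s, by linear_combination u * hk + a * heq⟩
    · rw [Int.modEq_iff_dvd]
      exact ⟨-(v * k) - b * s, by linear_combination -v * hk + b * heq⟩
  · rintro ⟨i, h1, h2⟩
    rw [Int.modEq_iff_dvd] at h1 h2 ⊢
    obtain ⟨k, hk⟩ := h1
    obtain ⟨l, hl⟩ := h2
    exact ⟨a * k - b * l, by linear_combination a * hk - b * hl⟩
end

section
/- Let X be a smooth projective curve of genus g over C, let H¹ = H¹(X, Z), and let {e_i, f_i : 1 ≤ i ≤ g} be a symplectic basis of H¹ with respect to the cup product pairing. For 1 ≤ k ≤ g - 2, let φ₁, φ₂, φ₃ ∈ {e_i, f_i : 1 ≤ i ≤ 3} and set φ_{2i+2} = e_{i+3}, φ_{2i+3} = f_{i+3} for 1 ≤ i ≤ k-1. Then the sum over permutations σ ∈ S_{2k+1} satisfying σ(1) < σ(2) < σ(3), σ(2i+2) < σ(2i+3) for 1 ≤ i ≤ k-1, and σ(2i+2) < σ(2i+4) for 1 ≤ i ≤ k-2, of the product ∏_{i=1}^{k-1} ⟨φ_{σ(2i+2)}, φ_{σ(2i+3)}⟩ times the indicator that {σ(1),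 σ(2), σ(3)} = {1, 2, 3}, equals 1; more precisely, the only permutation σ in this sum for which all pairings ⟨φ_{σ(2i+2)}, φ_{σ(2i+3)}⟩ are nonzero is the identity. -/
open scoped Classical

/-- The combinatorial identity underlying the reduction from the `k`-th
Ceresa cycle to the case `k = 1`.  The symplectic basis `{e_i, f_i : 1 ≤ i ≤ g}` of
`H¹(X, ℤ)` is encoded as pairs `(i, false) = e_i`, `(i, true) = f_i`, with the cup
product pairing `⟨e_i, f_j⟩ = δ_{ij} = -⟨f_j, e_i⟩`, `⟨e_i, e_j⟩ = ⟨f_i, f_j⟩ = 0`.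
Positions `1, …, 2k+1` of the paper are encoded as `Fin (2k+1)` via `j ↦ j - 1`.
Given `φ₁, φ₂, φ₃ ∈ {e_i, f_i : i ≤ 3}` and `φ_{2i+2} = e_{i+3}`, `φ_{2i+3} = f_{i+3}`
for `1 ≤ i ≤ k-1`, the sum over permutations `σ` with `σ(1) < σ(2) < σ(3)`,
`σ(2i+2) < σ(2i+3)` (`1 ≤ i ≤ k-1`), `σ(2i+2) < σ(2i+4)` (`1 ≤ i ≤ k-2`) of
`∏_{i=1}^{k-1} ⟨φ_{σ(2i+2)}, φ_{σ(2i+3)}⟩` times the indicator of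
`{σ(1), σ(2), σ(3)} = {1, 2, 3}` equals `1`; moreover the only such `σ` with all
pairings nonzero is the identity. -/
theorem ceresa_reduction_combinatorial_identity (g k : ℕ) (hk : 1 ≤ k) (hkg : k ≤ g - 2)
    (φ : Fin (2 * k + 1) → ℕ × Bool)
    (pair : ℕ × Bool → ℕ × Bool → ℤ)
    (hpair : pair = fun x y =>
      if x.2 = false ∧ y.2 = true ∧ x.1 = y.1 then 1
      else if x.2 = true ∧ y.2 = false ∧ x.1 = y.1 then -1 else 0)
    (idx : ℕ → Fin (2 * k + 1))
    (hidx : idx = fun m => ⟨m % (2 * k + 1), Nat.mod_lt m (Nat.succ_pos _)⟩)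
    (hφg : ∀ j : Fin (2 * k + 1), 1 ≤ (φ j).1 ∧ (φ j).1 ≤ g)
    (hφ123 : ∀ j : Fin (2 * k + 1), (j : ℕ) < 3 → (φ j).1 ≤ 3)
    (hφrest : ∀ i : ℕ, 1 ≤ i → i ≤ k - 1 →
      φ (idx (2 * i + 1)) = (i + 3, false) ∧ φ (idx (2 * i + 2)) = (i + 3, true)) :
    (∑ σ : Equiv.Perm (Fin (2 * k + 1)),
        if (σ (idx 0) < σ (idx 1) ∧ σ (idx 1) < σ (idx 2) ∧
            (∀ i : ℕ, 1 ≤ i → i ≤ k - 1 → σ (idx (2 * i + 1)) < σ (idx (2 * i + 2))) ∧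
            (∀ i : ℕ, 1 ≤ i → i ≤ k - 2 → σ (idx (2 * i + 1)) < σ (idx (2 * i + 3))) ∧
            ({σ (idx 0), σ (idx 1), σ (idx 2)} : Finset (Fin (2 * k + 1))) =
              {idx 0, idx 1, idx 2})
        then ∏ i ∈ Finset.Icc 1 (k - 1),
          pair (φ (σ (idx (2 * i + 1)))) (φ (σ (idx (2 * i + 2))))
        else 0) = 1 ∧
    (∀ σ : Equiv.Perm (Fin (2 * k + 1)),
        σ (idx 0) < σ (idx 1) → σ (idx 1) < σ (idx 2) →
        (∀ i : ℕ, 1 ≤ i → i ≤ k - 1 → σ (idx (2 * i + 1)) < σ (idx (2 * i + 2))) →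
        (∀ i : ℕ, 1 ≤ i → i ≤ k - 2 → σ (idx (2 * i + 1)) < σ (idx (2 * i + 3))) →
        ({σ (idx 0), σ (idx 1), σ (idx 2)} : Finset (Fin (2 * k + 1))) =
          {idx 0, idx 1, idx 2} →
        (∀ i : ℕ, 1 ≤ i → i ≤ k - 1 →
          pair (φ (σ (idx (2 * i + 1)))) (φ (σ (idx (2 * i + 2)))) ≠ 0) →
        σ = Equiv.refl (Fin (2 * k + 1))) := by
  -- basic facts about `idx`
  have hval : ∀ m : ℕ, m < 2 * k + 1 → ((idx m : Fin (2 * k + 1)) : ℕ) = m := by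
    intro m hm
    rw [hidx]
    simp [Nat.mod_eq_of_lt hm]
  have hidx_eq : ∀ (p : Fin (2 * k + 1)) (m : ℕ), m < 2 * k + 1 → (p : ℕ) = m →
      p = idx m := by
    intro p m hm hp
    apply Fin.ext
    rw [hval m hm, hp]
  -- nonzero pairing forces equal first coordinates
  have hpair_ne : ∀ x y : ℕ × Bool, pair x y ≠ 0 → x.1 = y.1 := by
    intro x y h
    rw [hpair] at h
    simp only at h
    split_ifs at h with h1 h2
    · exact h1.2.2
    · exact h2.2.2
    · exact absurd rfl h
  -- structure of φ at positions ≥ 3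
  have hstruct : ∀ p : Fin (2 * k + 1), 3 ≤ (p : ℕ) →
      ∃ j, 1 ≤ j ∧ j ≤ k - 1 ∧
        (((p : ℕ) = 2 * j + 1 ∧ φ p = (j + 3, false)) ∨
         ((p : ℕ) = 2 * j + 2 ∧ φ p = (j + 3, true))) := by
    intro p hp
    have hplt : (p : ℕ) < 2 * k + 1 := p.isLt
    rcases Nat.even_or_odd (p : ℕ) with he | ho
    · obtain ⟨m, hm⟩ := he
      refine ⟨m - 1, by omega, by omega, Or.inr ⟨by omega, ?_⟩⟩
      have h2 := (hφrest (m - 1) (by omega) (by omega)).2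
      have hpe : p = idx (2 * (m - 1) + 2) := hidx_eq p _ (by omega) (by omega)
      rw [hpe, h2]
    · obtain ⟨m, hm⟩ := ho
      refine ⟨m, by omega, by omega, Or.inl ⟨by omega, ?_⟩⟩
      have h1 := (hφrest m (by omega) (by omega)).1
      have hpe : p = idx (2 * m + 1) := hidx_eq p _ (by omega) (by omega)
      rw [hpe, h1]
  -- the key uniqueness statement
  have key : ∀ σ : Equiv.Perm (Fin (2 * k + 1)),
      σ (idx 0) < σ (idx 1) → σ (idx 1) < σ (idx 2) →
      (∀ i : ℕ, 1 ≤ i → i ≤ k - 1 → σ (idx (2 * i + 1)) < σ (idx (2 * i + 2))) →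
      (∀ i : ℕ, 1 ≤ i → i ≤ k - 2 → σ (idx (2 * i + 1)) < σ (idx (2 * i + 3))) →
      ({σ (idx 0), σ (idx 1), σ (idx 2)} : Finset (Fin (2 * k + 1))) =
        {idx 0, idx 1, idx 2} →
      (∀ i : ℕ, 1 ≤ i → i ≤ k - 1 →
        pair (φ (σ (idx (2 * i + 1)))) (φ (σ (idx (2 * i + 2)))) ≠ 0) →
      σ = Equiv.refl (Fin (2 * k + 1)) := by
    intro σ h01 h12 hlt hchain hset hnz
    rw [Fin.lt_def] at h01 h12
    -- membership of σ (idx j) in {idx 0, idx 1, idx 2}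
    have hv : ∀ p : Fin (2 * k + 1), p ∈ ({idx 0, idx 1, idx 2} : Finset (Fin (2 * k + 1))) →
        (p : ℕ) < 3 := by
      intro p hp
      simp only [Finset.mem_insert, Finset.mem_singleton] at hp
      rcases hp with h | h | h
      · rw [h, hval 0 (by omega)]; omega
      · rw [h, hval 1 (by omega)]; omega
      · rw [h, hval 2 (by omega)]; omega
    have h0m : σ (idx 0) ∈ ({idx 0, idx 1, idx 2} : Finset (Fin (2 * k + 1))) := by
      rw [← hset]; simp
    have h1m : σ (idx 1) ∈ ({idx 0, idx 1, idx 2} : Finset (Fin (2 * k + 1))) := by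
      rw [← hset]; simp
    have h2m : σ (idx 2) ∈ ({idx 0, idx 1, idx 2} : Finset (Fin (2 * k + 1))) := by
      rw [← hset]; simp
    have a0 := hv _ h0m
    have a1 := hv _ h1m
    have a2 := hv _ h2m
    have e0 : σ (idx 0) = idx 0 := hidx_eq _ 0 (by omega) (by omega)
    have e1 : σ (idx 1) = idx 1 := hidx_eq _ 1 (by omega) (by omega)
    have e2 : σ (idx 2) = idx 2 := hidx_eq _ 2 (by omega) (by omega)
    -- positions ≥ 3 map to positions ≥ 3
    have hge3 : ∀ p : Fin (2 * k + 1), 3 ≤ (p : ℕ) → 3 ≤ ((σ p) : ℕ) := by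
      intro p hp
      by_contra hlt3
      push_neg at hlt3
      have hcases : ((σ p) : ℕ) = 0 ∨ ((σ p) : ℕ) = 1 ∨ ((σ p) : ℕ) = 2 := by omega
      rcases hcases with h | h | h
      · have heq : σ p = σ (idx 0) := by rw [e0]; exact hidx_eq _ 0 (by omega) h
        have := σ.injective heq
        rw [this, hval 0 (by omega)] at hp; omega
      · have heq : σ p = σ (idx 1) := by rw [e1]; exact hidx_eq _ 1 (by omega) h
        have := σ.injective heq
        rw [this, hval 1 (by omega)] at hp; omega
      · have heq : σ p = σ (idx 2) := by rw [e2]; exact hidx_eq _ 2 (by omega) h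
        have := σ.injective heq
        rw [this, hval 2 (by omega)] at hp; omega
    -- each pair of positions maps to a pair of positions
    have hE : ∀ i, 1 ≤ i → i ≤ k - 1 → ∃ j, 1 ≤ j ∧ j ≤ k - 1 ∧
        ((σ (idx (2 * i + 1))) : ℕ) = 2 * j + 1 ∧
        ((σ (idx (2 * i + 2))) : ℕ) = 2 * j + 2 := by
      intro i h1 h2
      have hu3 : 3 ≤ ((σ (idx (2 * i + 1))) : ℕ) := by
        apply hge3; rw [hval _ (by omega)]; omega
      have hv3 : 3 ≤ ((σ (idx (2 * i + 2))) : ℕ) := by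
        apply hge3; rw [hval _ (by omega)]; omega
      obtain ⟨j, hj1, hj2, hj3⟩ := hstruct _ hu3
      obtain ⟨j', hj1', hj2', hj3'⟩ := hstruct _ hv3
      have heq1 : (φ (σ (idx (2 * i + 1)))).1 = (φ (σ (idx (2 * i + 2)))).1 :=
        hpair_ne _ _ (hnz i h1 h2)
      have hfu : (φ (σ (idx (2 * i + 1)))).1 = j + 3 := by
        rcases hj3 with ⟨_, h⟩ | ⟨_, h⟩ <;> rw [h]
      have hfv : (φ (σ (idx (2 * i + 2)))).1 = j' + 3 := by
        rcases hj3' with ⟨_, h⟩ | ⟨_, h⟩ <;> rw [h]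
      have hjj : j = j' := by omega
      have hlt' := hlt i h1 h2
      rw [Fin.lt_def] at hlt'
      have hu : ((σ (idx (2 * i + 1))) : ℕ) = 2 * j + 1 ∨
          ((σ (idx (2 * i + 1))) : ℕ) = 2 * j + 2 := by
        rcases hj3 with ⟨h, _⟩ | ⟨h, _⟩ <;> omega
      have hvv : ((σ (idx (2 * i + 2))) : ℕ) = 2 * j + 1 ∨
          ((σ (idx (2 * i + 2))) : ℕ) = 2 * j + 2 := by
        rcases hj3' with ⟨h, _⟩ | ⟨h, _⟩ <;> omega
      exact ⟨j, hj1, hj2, by omega, by omega⟩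
    -- monotonicity along the chain
    have hmono : ∀ i, 1 ≤ i → i ≤ k - 2 →
        ((σ (idx (2 * i + 1))) : ℕ) + 2 ≤ ((σ (idx (2 * i + 3))) : ℕ) := by
      intro i h1 h2
      have hc := hchain i h1 h2
      rw [Fin.lt_def] at hc
      obtain ⟨j, hj1, hj2, hj3, _⟩ := hE i h1 (by omega)
      have he2 : (2 * (i + 1) + 1) = 2 * i + 3 := by ring
      obtain ⟨j', hj1', hj2', hj3', _⟩ := hE (i + 1) (by omega) (by omega)
      rw [he2] at hj3'
      omega
    -- lower bound
    have hlow : ∀ i, 1 ≤ i → i ≤ k - 1 → 2 * i + 1 ≤ ((σ (idx (2 * i + 1))) : ℕ) := by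
      intro i hi
      induction i, hi using Nat.le_induction with
      | base =>
        intro h
        obtain ⟨j, hj1, _, hj3, _⟩ := hE 1 le_rfl h
        omega
      | succ i hi ih =>
        intro h
        have h1 := ih (by omega)
        have h2 := hmono i hi (by omega)
        have he2 : (2 * (i + 1) + 1) = 2 * i + 3 := by ring
        rw [he2]
        omega
    -- upper bound
    have hup : ∀ d i, 1 ≤ i → i ≤ k - 1 → k - 1 - i = d →
        ((σ (idx (2 * i + 1))) : ℕ) ≤ 2 * i + 1 := by
      intro d
      induction d with
      | zero =>
        intro i h1 h2 h3
        obtain ⟨j, _, hj2, hj3, _⟩ := hE i h1 h2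
        omega
      | succ d ih =>
        intro i h1 h2 h3
        have hA := ih (i + 1) (by omega) (by omega) (by omega)
        have he2 : (2 * (i + 1) + 1) = 2 * i + 3 := by ring
        rw [he2] at hA
        have hB := hmono i h1 (by omega)
        omega
    -- conclude σ = refl
    apply Equiv.ext
    intro x
    simp only [Equiv.refl_apply]
    by_cases hx : (x : ℕ) < 3
    · rcases (by omega : (x : ℕ) = 0 ∨ (x : ℕ) = 1 ∨ (x : ℕ) = 2) with h | h | h
      · have hxe : x = idx 0 := hidx_eq x 0 (by omega) h
        rw [hxe, e0]
      · have hxe : x = idx 1 := hidx_eq x 1 (by omega) h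
        rw [hxe, e1]
      · have hxe : x = idx 2 := hidx_eq x 2 (by omega) h
        rw [hxe, e2]
    · push_neg at hx
      obtain ⟨j, hj1, hj2, hj3⟩ := hstruct x hx
      have hl := hlow j hj1 hj2
      have hu := hup (k - 1 - j) j hj1 hj2 rfl
      obtain ⟨j', hj1', hj2', hu', hv'⟩ := hE j hj1 hj2
      rcases hj3 with ⟨hvx, _⟩ | ⟨hvx, _⟩
      · have hxe : x = idx (2 * j + 1) := hidx_eq x _ (by omega) hvx
        apply Fin.ext
        rw [hxe, hval _ (by omega)]
        omega
      · have hxe : x = idx (2 * j + 2) := hidx_eq x _ (by omega) hvx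
        apply Fin.ext
        rw [hxe, hval _ (by omega)]
        omega
  refine ⟨?_, key⟩
  -- the sum: only the identity contributes
  have h0 : ∀ σ : Equiv.Perm (Fin (2 * k + 1)), σ ∈ (Finset.univ : Finset (Equiv.Perm (Fin (2 * k + 1)))) →
      σ ≠ Equiv.refl (Fin (2 * k + 1)) →
      (if (σ (idx 0) < σ (idx 1) ∧ σ (idx 1) < σ (idx 2) ∧
            (∀ i : ℕ, 1 ≤ i → i ≤ k - 1 → σ (idx (2 * i + 1)) < σ (idx (2 * i + 2))) ∧
            (∀ i : ℕ, 1 ≤ i → i ≤ k - 2 → σ (idx (2 * i + 1)) < σ (idx (2 * i + 3))) ∧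
            ({σ (idx 0), σ (idx 1), σ (idx 2)} : Finset (Fin (2 * k + 1))) =
              {idx 0, idx 1, idx 2})
        then ∏ i ∈ Finset.Icc 1 (k - 1),
          pair (φ (σ (idx (2 * i + 1)))) (φ (σ (idx (2 * i + 2))))
        else 0) = 0 := by
    intro σ _ hσ
    split_ifs with hc
    · obtain ⟨c1, c2, c3, c4, c5⟩ := hc
      by_contra hne0
      have hnz : ∀ i : ℕ, 1 ≤ i → i ≤ k - 1 →
          pair (φ (σ (idx (2 * i + 1)))) (φ (σ (idx (2 * i + 2)))) ≠ 0 := by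
        intro i h1 h2 hzero
        exact hne0 (Finset.prod_eq_zero (Finset.mem_Icc.mpr ⟨h1, h2⟩) hzero)
      exact hσ (key σ c1 c2 c3 c4 c5 hnz)
    · rfl
  rw [Finset.sum_eq_single_of_mem (Equiv.refl (Fin (2 * k + 1))) (Finset.mem_univ _) h0]
  rw [if_pos]
  · apply Finset.prod_eq_one
    intro i hi
    rw [Finset.mem_Icc] at hi
    rw [Equiv.refl_apply, Equiv.refl_apply, (hφrest i hi.1 hi.2).1,
      (hφrest i hi.1 hi.2).2, hpair]
    simp
  · refine ⟨?_, ?_, ?_, ?_, rfl⟩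
    · simp only [Equiv.refl_apply]
      rw [Fin.lt_def, hval 0 (by omega), hval 1 (by omega)]
      omega
    · simp only [Equiv.refl_apply]
      rw [Fin.lt_def, hval 1 (by omega), hval 2 (by omega)]
      omega
    · intro i h1 h2
      simp only [Equiv.refl_apply]
      rw [Fin.lt_def, hval _ (by omega), hval _ (by omega)]
      omega
    · intro i h1 h2
      simp only [Equiv.refl_apply]
      rw [Fin.lt_def, hval _ (by omega), hval _ (by omega)]
      omega
end
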